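/- (Hard case of Theorem 2, Rendl–Wolkowicz) Suppose a is orthogonal to the eigenspace of λmin(A) (the hard case), and set t0 := λmin(A) + aᵀ(A − λmin(A)·I)† a, where † is the Moore–Penrose pseudoinverse. Then: for t < t0, every nonzero eigenvector of D(t) for λmin(D(t)) has nonzero first component; for t > t0, every eigenvector of D(t) for λmin(D(t)) has zero first component; and for t = t0 there exists a basis of the eigenspace of λmin(D(t0)) such that exactly one basis vector has nonzero first component and all other basis vectors have zero first component. -/

import Mathlib

open Matrix

/-- The smallest eigenvalue of a real (symmetric) matrix. -/
noncomputable def lambdaMin {ι : Type} [Fintype ι] (M : Matrix ι ι ℝ) : ℝ :=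
  sInf {μ : ℝ | ∃ v : ι → ℝ, v ≠ 0 ∧ M.mulVec v = μ • v}

/-- The multiplicity of the smallest eigenvalue: the dimension of Null(M - λmin(M)·I). -/
noncomputable def eigMult {ι : Type} [Fintype ι] [DecidableEq ι] (M : Matrix ι ι ℝ) : ℕ :=
  Module.finrank ℝ (LinearMap.ker (M - lambdaMin M • (1 : Matrix ι ι ℝ)).mulVecLin)

/-- The bordered matrix D(t) = [[t, -aᵀ],[-a, A]]. -/
noncomputable def borderD {n : ℕ} (A : Matrix (Fin n) (Fin n) ℝ) (a : Fin n → ℝ) (t : ℝ) :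
    Matrix (Unit ⊕ Fin n) (Unit ⊕ Fin n) ℝ :=
  Matrix.fromBlocks (Matrix.of fun (_ : Unit) (_ : Unit) => t)
    (Matrix.of fun (_ : Unit) (j : Fin n) => -a j)
    (Matrix.of fun (i : Fin n) (_ : Unit) => -a i) A

/-- The bordered matrix D(t,λ) = [[t, (-a + (λ/2)b)ᵀ],[-a + (λ/2)b, A]]. -/
noncomputable def borderD2 {n : ℕ} (A : Matrix (Fin n) (Fin n) ℝ) (a b : Fin n → ℝ)
    (t l : ℝ) : Matrix (Unit ⊕ Fin n) (Unit ⊕ Fin n) ℝ :=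
  borderD A (fun j => a j - (l / 2) * b j) t

/-- The objective xᵀAx - 2aᵀx. -/
noncomputable def objQ {n : ℕ} (A : Matrix (Fin n) (Fin n) ℝ) (a : Fin n → ℝ)
    (x : Fin n → ℝ) : ℝ :=
  x ⬝ᵥ A.mulVec x - 2 * (a ⬝ᵥ x)

/-- The optimal value p* of eTRS. -/
noncomputable def pstar {n : ℕ} (A : Matrix (Fin n) (Fin n) ℝ) (a b : Fin n → ℝ)
    (c Δ : ℝ) : ℝ :=
  sInf {v : ℝ | ∃ x : Fin n → ℝ, x ⬝ᵥ x ≤ Δ ∧ b ⬝ᵥ x ≤ c ∧ v = objQ A a x}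

/-- The Lagrangian of eTRS. -/
noncomputable def lagr {n : ℕ} (A : Matrix (Fin n) (Fin n) ℝ) (a b : Fin n → ℝ)
    (c Δ : ℝ) (x : Fin n → ℝ) (l1 l2 : ℝ) : ℝ :=
  objQ A a x + l1 * (x ⬝ᵥ x - Δ) + l2 * (b ⬝ᵥ x - c)

/-- The Lagrangian dual value d* of eTRS:
the supremum over λ1, λ2 ≥ 0 of inf_x of the Lagrangian, encoded as the supremum of all
values that are lower bounds of the Lagrangian for some admissible multipliers. -/
noncomputable def dstar {n : ℕ} (A : Matrix (Fin n) (Fin n) ℝ) (a b : Fin n → ℝ)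
    (c Δ : ℝ) : ℝ :=
  sSup {v : ℝ | ∃ l1 l2 : ℝ, 0 ≤ l1 ∧ 0 ≤ l2 ∧ ∀ x : Fin n → ℝ, v ≤ lagr A a b c Δ x l1 l2}

/-- x is a global optimal solution of eTRS. -/
def isOptimal {n : ℕ} (A : Matrix (Fin n) (Fin n) ℝ) (a b : Fin n → ℝ)
    (c Δ : ℝ) (x : Fin n → ℝ) : Prop :=
  x ⬝ᵥ x ≤ Δ ∧ b ⬝ᵥ x ≤ c ∧
    ∀ y : Fin n → ℝ, y ⬝ᵥ y ≤ Δ → b ⬝ᵥ y ≤ c → objQ A a x ≤ objQ A a y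

/-- The dual objective k(t,λ) = (Δ+1)·λmin(D(t,λ)) - t - λc. -/
noncomputable def ktl {n : ℕ} (A : Matrix (Fin n) (Fin n) ℝ) (a b : Fin n → ℝ)
    (c Δ : ℝ) (t l : ℝ) : ℝ :=
  (Δ + 1) * lambdaMin (borderD2 A a b t l) - t - l * c
section K
variable {ι : Type} [Fintype ι] [DecidableEq ι] [Nonempty ι]

lemma lambdaMin_spec {M : Matrix ι ι ℝ} (hM : M.IsHermitian) :
    (∃ v : ι → ℝ, v ≠ 0 ∧ M.mulVec v = lambdaMin M • v) ∧
    (∀ (μ : ℝ) (v : ι → ℝ), v ≠ 0 → M.mulVec v = μ • v → lambdaMin M ≤ μ) ∧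
    (∀ v : ι → ℝ, lambdaMin M * (v ⬝ᵥ v) ≤ v ⬝ᵥ M.mulVec v) := by
  classical
  haveI : Nontrivial (EuclideanSpace ℝ ι) := by
    obtain ⟨i⟩ := ‹Nonempty ι›
    refine ⟨EuclideanSpace.single i (1:ℝ), 0, fun h => one_ne_zero (α := ℝ) ?_⟩
    simpa using congrFun (congrArg (WithLp.equiv 2 (ι → ℝ)) h) i
  set L : EuclideanSpace ℝ ι →ₗ[ℝ] EuclideanSpace ℝ ι := Matrix.toEuclideanLin M with hL
  have hSym : L.IsSymmetric := (Matrix.isHermitian_iff_isSymmetric).mp hM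
  set e : ℝ := ⨅ x : { x : EuclideanSpace ℝ ι // x ≠ 0 },
      RCLike.re (inner ℝ (L x) (x : EuclideanSpace ℝ ι) : ℝ) / ‖(x : EuclideanSpace ℝ ι)‖ ^ 2 with he
  have hEig : Module.End.HasEigenvalue L e := by
    exact hSym.hasEigenvalue_iInf_of_finiteDimensional
  set T : EuclideanSpace ℝ ι →L[ℝ] EuclideanSpace ℝ ι := LinearMap.toContinuousLinearMap L with hT
  have hLT : ∀ x, L x = T x := fun x => rfl
  have hbdd : BddBelow (Set.range fun x : { x : EuclideanSpace ℝ ι // x ≠ 0 } =>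
      RCLike.re (inner ℝ (L x) (x : EuclideanSpace ℝ ι) : ℝ) / ‖(x : EuclideanSpace ℝ ι)‖ ^ 2) := by
    refine ⟨-‖T‖, ?_⟩
    rintro y ⟨x, rfl⟩
    have hx : (0:ℝ) < ‖(x : EuclideanSpace ℝ ι)‖ := norm_pos_iff.mpr x.2
    have h1 : |(inner ℝ (L x) (x : EuclideanSpace ℝ ι) : ℝ)| ≤ ‖T‖ * ‖(x : EuclideanSpace ℝ ι)‖ ^ 2 := by
      calc |(inner ℝ (L x) (x : EuclideanSpace ℝ ι) : ℝ)|
          ≤ ‖L x‖ * ‖(x : EuclideanSpace ℝ ι)‖ := abs_real_inner_le_norm _ _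
        _ ≤ ‖T‖ * ‖(x : EuclideanSpace ℝ ι)‖ * ‖(x : EuclideanSpace ℝ ι)‖ := by
            have := T.le_opNorm (x : EuclideanSpace ℝ ι)
            rw [hLT]
            nlinarith [norm_nonneg (x : EuclideanSpace ℝ ι)]
        _ = ‖T‖ * ‖(x : EuclideanSpace ℝ ι)‖ ^ 2 := by ring
    have h2 : -(‖T‖ * ‖(x : EuclideanSpace ℝ ι)‖ ^ 2) ≤
        RCLike.re (inner ℝ (L x) (x : EuclideanSpace ℝ ι) : ℝ) := by
      have := neg_abs_le (inner ℝ (L x) (x : EuclideanSpace ℝ ι) : ℝ)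
      simp only [RCLike.re_to_real]
      linarith
    rw [le_div_iff₀ (by positivity)]
    simpa [neg_mul] using h2
  have hray : ∀ x : EuclideanSpace ℝ ι, x ≠ 0 →
      e ≤ RCLike.re (inner ℝ (L x) (x : EuclideanSpace ℝ ι) : ℝ) / ‖x‖ ^ 2 := by
    intro x hx
    exact ciInf_le hbdd ⟨x, hx⟩
  have hray' : ∀ v : ι → ℝ, v ≠ 0 → e * (v ⬝ᵥ v) ≤ v ⬝ᵥ M.mulVec v := by
    intro v hv
    set x : EuclideanSpace ℝ ι := (WithLp.equiv 2 (ι → ℝ)).symm v with hx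
    have hxne : x ≠ 0 := by
      simpa [hx] using (WithLp.equiv 2 (ι → ℝ)).symm.injective.ne hv
    have hinner : (inner ℝ (L x) x : ℝ) = (M.mulVec v) ⬝ᵥ v := by
      rw [hL]
      rw [show L x = (WithLp.equiv 2 (ι → ℝ)).symm (M.mulVec v) from
        rfl]
      rw [EuclideanSpace.inner_eq_star_dotProduct]
      simp [dotProduct, hx, mul_comm]
    have hnorm : ‖x‖ ^ 2 = v ⬝ᵥ v := by
      rw [← real_inner_self_eq_norm_sq, hx, EuclideanSpace.inner_eq_star_dotProduct]
      simp [dotProduct]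
    have hvv : (0:ℝ) < v ⬝ᵥ v := by
      have hnn : (0:ℝ) ≤ v ⬝ᵥ v := Finset.sum_nonneg fun i _ => mul_self_nonneg (v i)
      rcases lt_or_eq_of_le hnn with h | h
      · exact h
      · exact absurd ((dotProduct_self_eq_zero).mp h.symm) hv
    have := hray x hxne
    rw [hinner, hnorm] at this
    simp only [RCLike.re_to_real] at this
    rw [le_div_iff₀ hvv] at this
    calc e * (v ⬝ᵥ v) ≤ M.mulVec v ⬝ᵥ v := this
      _ = v ⬝ᵥ M.mulVec v := dotProduct_comm _ _
  obtain ⟨x0, hx0⟩ := hEig.exists_hasEigenvector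
  set v0 : ι → ℝ := WithLp.equiv 2 (ι → ℝ) x0 with hv0
  have hv0ne : v0 ≠ 0 := by
    simpa [hv0] using (WithLp.equiv 2 (ι → ℝ)).injective.ne hx0.2
  have hv0eig : M.mulVec v0 = e • v0 := by
    have h1 : L x0 = e • x0 := hx0.apply_eq_smul
    have := congrArg (WithLp.equiv 2 (ι → ℝ)) h1
    simpa [hL, hv0] using this
  have hlower : ∀ (μ : ℝ) (v : ι → ℝ), v ≠ 0 → M.mulVec v = μ • v → e ≤ μ := by
    intro μ v hv heq
    have h1 := hray' v hv
    rw [heq] at h1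
    have hvv : (0:ℝ) < v ⬝ᵥ v := by
      have hnn : (0:ℝ) ≤ v ⬝ᵥ v := Finset.sum_nonneg fun i _ => mul_self_nonneg (v i)
      rcases lt_or_eq_of_le hnn with h | h
      · exact h
      · exact absurd ((dotProduct_self_eq_zero).mp h.symm) hv
    have h2 : v ⬝ᵥ (μ • v) = μ * (v ⬝ᵥ v) := by
      simp [dotProduct_smul, smul_eq_mul]
    rw [h2] at h1
    exact le_of_mul_le_mul_right (by linarith) hvv
  have hmem : e ∈ {μ : ℝ | ∃ v : ι → ℝ, v ≠ 0 ∧ M.mulVec v = μ • v} := ⟨v0, hv0ne, hv0eig⟩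
  have hlb : ∀ μ ∈ {μ : ℝ | ∃ v : ι → ℝ, v ≠ 0 ∧ M.mulVec v = μ • v}, e ≤ μ := by
    rintro μ ⟨v, hv, heq⟩
    exact hlower μ v hv heq
  have hlam : lambdaMin M = e := by
    apply le_antisymm
    · exact csInf_le ⟨e, hlb⟩ hmem
    · exact le_csInf ⟨e, hmem⟩ hlb
  refine ⟨⟨v0, hv0ne, by rw [hlam]; exact hv0eig⟩, ?_, ?_⟩
  · intro μ v hv heq; rw [hlam]; exact hlower μ v hv heq
  · intro v
    by_cases hv : v = 0
    · simp [hv]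
    · rw [hlam]; exact hray' v hv

end K

section helpers
variable {n : ℕ} (A : Matrix (Fin n) (Fin n) ℝ) (a : Fin n → ℝ) (t : ℝ)

lemma dot_sum (y z : Unit ⊕ Fin n → ℝ) :
    y ⬝ᵥ z = y (Sum.inl ()) * z (Sum.inl ()) + (y ∘ Sum.inr) ⬝ᵥ (z ∘ Sum.inr) := by
  simp [dotProduct, Fintype.sum_sum_type, Function.comp]

lemma borderD_mulVec_inl (y : Unit ⊕ Fin n → ℝ) :
    (borderD A a t).mulVec y (Sum.inl ()) = t * y (Sum.inl ()) - a ⬝ᵥ (y ∘ Sum.inr) := by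
  simp [borderD, Matrix.mulVec, dotProduct, Fintype.sum_sum_type, Function.comp,
    sub_eq_add_neg]

lemma borderD_mulVec_inr (y : Unit ⊕ Fin n → ℝ) (i : Fin n) :
    (borderD A a t).mulVec y (Sum.inr i) = -(y (Sum.inl ()) * a i) + A.mulVec (y ∘ Sum.inr) i := by
  simp [borderD, Matrix.mulVec, dotProduct, Fintype.sum_sum_type, Function.comp]
  ring

lemma borderD_isHermitian (hA : A.IsHermitian) : (borderD A a t).IsHermitian := by
  have hsymm : ∀ i j, A j i = A i j := fun i j => by simpa using hA.apply i j
  ext (u | i) (v | j) <;>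
    simp [borderD, Matrix.conjTranspose_apply, Matrix.fromBlocks, hsymm]

lemma mem_ker_iff {ι : Type} [Fintype ι] [DecidableEq ι] (M : Matrix ι ι ℝ) (c : ℝ)
    (y : ι → ℝ) : y ∈ LinearMap.ker ((M - c • (1 : Matrix ι ι ℝ)).mulVecLin) ↔
      M.mulVec y = c • y := by
  simp [LinearMap.mem_ker, Matrix.mulVecLin_apply, Matrix.sub_mulVec,
    Matrix.smul_mulVec, Matrix.one_mulVec, sub_eq_zero]

lemma borderD_eigen_elim (c lam : ℝ) (v : Fin n → ℝ)
    (h1 : t * c - a ⬝ᵥ v = lam * c) (h2 : A.mulVec v = c • a + lam • v) :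
    (borderD A a t).mulVec (Sum.elim (fun _ => c) v) = lam • Sum.elim (fun _ => c) v := by
  funext u
  cases u with
  | inl u =>
    cases u
    rw [borderD_mulVec_inl]
    simpa using h1
  | inr i =>
    rw [borderD_mulVec_inr]
    have h3 := congrFun h2 i
    simp only [Sum.elim_comp_inr, Sum.elim_inl, Sum.elim_inr, Pi.add_apply, Pi.smul_apply,
      smul_eq_mul] at h3 ⊢
    linarith [h3]

end helpers

/-- Hard case of Theorem 2 (Rendl–Wolkowicz).
Here `w` is any solution of (A − λmin(A)·I)w = a, so that
t0 = λmin(A) + aᵀ(A − λmin(A)·I)†a = λmin(A) + aᵀw (in the hard case aᵀw is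
independent of the choice of solution w). -/
theorem stmt3 {n : ℕ} (hn : 1 ≤ n) (A : Matrix (Fin n) (Fin n) ℝ) (hA : A.IsHermitian)
    (a : Fin n → ℝ) (Δ : ℝ) (hΔ : 0 < Δ)
    (hhard : ∀ v : Fin n → ℝ, A.mulVec v = lambdaMin A • v → a ⬝ᵥ v = 0)
    (w : Fin n → ℝ) (hw : (A - lambdaMin A • (1 : Matrix (Fin n) (Fin n) ℝ)).mulVec w = a)
    (t0 : ℝ) (ht0 : t0 = lambdaMin A + a ⬝ᵥ w) :
    (∀ t : ℝ, t < t0 → ∀ y : Unit ⊕ Fin n → ℝ, y ≠ 0 →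
        (borderD A a t).mulVec y = lambdaMin (borderD A a t) • y →
        y (Sum.inl ()) ≠ 0) ∧
    (∀ t : ℝ, t0 < t → ∀ y : Unit ⊕ Fin n → ℝ,
        (borderD A a t).mulVec y = lambdaMin (borderD A a t) • y →
        y (Sum.inl ()) = 0) ∧
    (∃ (k : ℕ) (f : Fin k → (Unit ⊕ Fin n → ℝ)),
        LinearIndependent ℝ f ∧
        Submodule.span ℝ (Set.range f) =
          LinearMap.ker ((borderD A a t0 - lambdaMin (borderD A a t0) •
            (1 : Matrix (Unit ⊕ Fin n) (Unit ⊕ Fin n) ℝ)).mulVecLin) ∧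
        ∃ i0 : Fin k, f i0 (Sum.inl ()) ≠ 0 ∧
          ∀ i : Fin k, i ≠ i0 → f i (Sum.inl ()) = 0) := by
  classical
  haveI : Nonempty (Fin n) := ⟨⟨0, hn⟩⟩
  obtain ⟨⟨v0, hv0ne, hv0eig⟩, hA2, hA3⟩ := lambdaMin_spec hA
  set δ : ℝ := lambdaMin A with hδdef
  -- A *ᵥ w = a + δ • w
  have hwA : A.mulVec w = a + δ • w := by
    have h := hw
    rw [Matrix.sub_mulVec, Matrix.smul_mulVec, Matrix.one_mulVec, sub_eq_iff_eq_add] at h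
    exact h
  have hAT : Aᵀ = A := by
    ext i j; simpa using hA.apply i j
  have hsymdot : ∀ u v : Fin n → ℝ, u ⬝ᵥ (A.mulVec v) = (A.mulVec u) ⬝ᵥ v := by
    intro u v
    rw [Matrix.dotProduct_mulVec, ← Matrix.mulVec_transpose, hAT]
  have hermD : ∀ t : ℝ, (borderD A a t).IsHermitian := fun t => borderD_isHermitian A a t hA
  -- δ is an eigenvalue of every D(t)
  have hF1 : ∀ t : ℝ, lambdaMin (borderD A a t) ≤ δ := by
    intro t
    obtain ⟨i, hi⟩ := Function.ne_iff.mp hv0ne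
    refine (lambdaMin_spec (hermD t)).2.1 δ (Sum.elim (fun _ => 0) v0) ?_ ?_
    · intro h; exact hi (by simpa using congrFun h (Sum.inr i))
    · refine borderD_eigen_elim A a t 0 δ v0 ?_ ?_
      · rw [hhard v0 hv0eig]; ring
      · rw [hv0eig]; funext i'; simp
  -- Core computation: eigenvector with nonzero first component gives bound on t
  have hHC : ∀ (t lam : ℝ), lam ≤ δ → ∀ y : Unit ⊕ Fin n → ℝ,
      (borderD A a t).mulVec y = lam • y → y (Sum.inl ()) ≠ 0 → t ≤ lam + a ⬝ᵥ w := by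
    intro t lam hle y heig hy0
    set y0 : ℝ := y (Sum.inl ()) with hy0def
    set yr : Fin n → ℝ := y ∘ Sum.inr with hyr
    set x : Fin n → ℝ := y0⁻¹ • yr with hx
    have h1 : t * y0 - a ⬝ᵥ yr = lam * y0 := by
      have := congrFun heig (Sum.inl ())
      rw [borderD_mulVec_inl] at this
      simpa using this
    have hax : a ⬝ᵥ x = y0⁻¹ * (a ⬝ᵥ yr) := by
      simp [hx, dotProduct_smul, smul_eq_mul]
    have ht : t = lam + a ⬝ᵥ x := by
      rw [hax]
      field_simp
      nlinarith [h1]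
    have hvr : A.mulVec yr = y0 • a + lam • yr := by
      funext i
      have := congrFun heig (Sum.inr i)
      rw [borderD_mulVec_inr] at this
      simp only [Pi.add_apply, Pi.smul_apply, smul_eq_mul] at this ⊢
      have e1 : yr i = y (Sum.inr i) := rfl
      have e2 : y0 = y (Sum.inl ()) := rfl
      have e3 : (A.mulVec yr) i = (A.mulVec (y ∘ Sum.inr)) i := rfl
      rw [e3, e1, e2]
      linarith [this]
    have hAx : A.mulVec x = a + lam • x := by
      rw [hx, Matrix.mulVec_smul, hvr]
      funext i
      simp only [Pi.smul_apply, Pi.add_apply, smul_eq_mul]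
      field_simp
    -- a ⬝ᵥ x - a ⬝ᵥ w = (lam - δ) * (w ⬝ᵥ x)
    have hkey : a ⬝ᵥ x = a ⬝ᵥ w + (lam - δ) * (w ⬝ᵥ x) := by
      have h2 : a ⬝ᵥ x = (A.mulVec w) ⬝ᵥ x - δ * (w ⬝ᵥ x) := by
        rw [hwA]
        simp [add_dotProduct, smul_dotProduct, smul_eq_mul]
        all_goals ring
      have h3 : (A.mulVec w) ⬝ᵥ x = w ⬝ᵥ (A.mulVec x) := (hsymdot w x).symm
      rw [h2, h3, hAx]
      simp [dotProduct_add, dotProduct_smul, smul_eq_mul,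
        dotProduct_comm a w]
      all_goals ring
    -- positivity: 0 ≤ (lam - δ) * (x ⬝ᵥ x - w ⬝ᵥ x)
    have hpsd : 0 ≤ (lam - δ) * (x ⬝ᵥ x - w ⬝ᵥ x) := by
      have hu := hA3 (x - w)
      have hsub : A.mulVec (x - w) = (lam - δ) • x + δ • (x - w) := by
        rw [Matrix.mulVec_sub, hAx, hwA]
        funext i
        simp only [Pi.sub_apply, Pi.add_apply, Pi.smul_apply, smul_eq_mul]
        ring
      rw [hsub] at hu
      have hexp : (x - w) ⬝ᵥ ((lam - δ) • x + δ • (x - w)) =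
          (lam - δ) * (x ⬝ᵥ x - w ⬝ᵥ x) + δ * ((x - w) ⬝ᵥ (x - w)) := by
        simp [dotProduct_add, dotProduct_smul, smul_eq_mul,
          sub_dotProduct]
        all_goals ring
      rw [hexp] at hu
      linarith
    have hxx : 0 ≤ x ⬝ᵥ x := Finset.sum_nonneg fun i _ => mul_self_nonneg (x i)
    have haxw : a ⬝ᵥ x ≤ a ⬝ᵥ w := by nlinarith [hkey, hpsd]
    linarith [ht, haxw]
  refine ⟨?_, ?_, ?_⟩
  · -- Part 1: t < t0
    intro t ht y hyne heig hy0
    set yt : Unit ⊕ Fin n → ℝ := Sum.elim (fun _ => 1) w with hyt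
    have hray := (lambdaMin_spec (hermD t)).2.2 yt
    have hdot1 : yt ⬝ᵥ yt = 1 + w ⬝ᵥ w := by
      rw [dot_sum]; simp [hyt]
    have hdot2 : yt ⬝ᵥ ((borderD A a t).mulVec yt) = t - a ⬝ᵥ w + δ * (w ⬝ᵥ w) := by
      rw [dot_sum]
      have h4 : yt (Sum.inl ()) = 1 := rfl
      have h5 : yt ∘ Sum.inr = w := rfl
      have e1 : (borderD A a t).mulVec yt (Sum.inl ()) = t - a ⬝ᵥ w := by
        rw [borderD_mulVec_inl, h4, h5]; ring
      have e2 : ((borderD A a t).mulVec yt) ∘ Sum.inr = -a + A.mulVec w := by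
        funext i
        rw [Function.comp_apply, borderD_mulVec_inr, h4, h5]
        simp
      have e3 : w ⬝ᵥ (-a + A.mulVec w) = -(w ⬝ᵥ a) + w ⬝ᵥ (a + δ • w) := by
        rw [← hwA]
        simp [dotProduct_add]
      rw [e1, e2, h4, h5, e3]
      simp only [dotProduct_add, dotProduct_smul, smul_eq_mul,
        dotProduct_comm w a]
      ring
    have hww : 0 ≤ w ⬝ᵥ w := Finset.sum_nonneg fun i _ => mul_self_nonneg (w i)
    have hlt : lambdaMin (borderD A a t) < δ := by
      rw [hdot1, hdot2] at hray
      nlinarith [hray, ht0, ht]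
    set yr : Fin n → ℝ := y ∘ Sum.inr with hyr
    have hyrne : yr ≠ 0 := by
      intro h
      apply hyne
      funext u
      cases u with
      | inl u => cases u; exact hy0
      | inr i => exact congrFun h i
    have heigr : A.mulVec yr = lambdaMin (borderD A a t) • yr := by
      funext i
      have h2 := congrFun heig (Sum.inr i)
      rw [borderD_mulVec_inr, hy0] at h2
      have e1 : yr i = y (Sum.inr i) := rfl
      have e3 : (A.mulVec yr) i = (A.mulVec (y ∘ Sum.inr)) i := rfl
      simp only [Pi.smul_apply, smul_eq_mul] at h2 ⊢
      rw [e3, e1]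
      linarith [h2]
    exact absurd (hA2 _ yr hyrne heigr) (not_le.mpr hlt)
  · -- Part 2: t0 < t
    intro t ht y heig
    by_contra hy0
    have h1 := hHC t (lambdaMin (borderD A a t)) (hF1 t) y heig hy0
    linarith [hF1 t, h1]
  · -- Part 3: t = t0
    have hδD : lambdaMin (borderD A a t0) = δ := by
      refine le_antisymm (hF1 t0) ?_
      by_contra h
      push_neg at h
      obtain ⟨y, hyne, heig⟩ := (lambdaMin_spec (hermD t0)).1
      by_cases hy0 : y (Sum.inl ()) = 0
      · set yr : Fin n → ℝ := y ∘ Sum.inr with hyr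
        have hyrne : yr ≠ 0 := by
          intro hq
          apply hyne
          funext u
          cases u with
          | inl u => cases u; exact hy0
          | inr i => exact congrFun hq i
        have heigr : A.mulVec yr = lambdaMin (borderD A a t0) • yr := by
          funext i
          have h2 := congrFun heig (Sum.inr i)
          rw [borderD_mulVec_inr, hy0] at h2
          have e1 : yr i = y (Sum.inr i) := rfl
          have e3 : (A.mulVec yr) i = (A.mulVec (y ∘ Sum.inr)) i := rfl
          simp only [Pi.smul_apply, smul_eq_mul] at h2 ⊢
          rw [e3, e1]
          linarith [h2]
        exact absurd (hA2 _ yr hyrne heigr) (not_le.mpr h)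
      · have := hHC t0 (lambdaMin (borderD A a t0)) (hF1 t0) y heig hy0
        linarith
    simp only [hδD]
    set K := LinearMap.ker ((A - δ • (1 : Matrix (Fin n) (Fin n) ℝ)).mulVecLin) with hK
    set m := Module.finrank ℝ K with hm
    let B : Module.Basis (Fin m) ℝ K := Module.finBasis ℝ K
    let j : (Fin n → ℝ) →ₗ[ℝ] (Unit ⊕ Fin n → ℝ) :=
      { toFun := fun v => Sum.elim (fun _ => (0:ℝ)) v
        map_add' := by
          intro v v'
          funext u
          cases u with
          | inl u => simp
          | inr i => simp
        map_smul' := by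
          intro c v
          funext u
          cases u with
          | inl u => simp
          | inr i => simp }
    have hjinj : Function.Injective j := by
      intro v v' h
      funext i
      exact congrFun h (Sum.inr i)
    set ystar : Unit ⊕ Fin n → ℝ := Sum.elim (fun _ => (1:ℝ)) w with hystar
    set g : Fin m → (Unit ⊕ Fin n → ℝ) := fun i => j (K.subtype (B i)) with hg
    have hgapp : ∀ (i : Fin m), g i = Sum.elim (fun _ => (0:ℝ)) (K.subtype (B i)) :=
      fun i => rfl
    have hgker : ∀ i : Fin m, A.mulVec (K.subtype (B i)) = δ • (K.subtype (B i)) := by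
      intro i
      exact (mem_ker_iff A δ _).mp (B i).2
    -- eigen equations
    have hystar_eig : (borderD A a t0).mulVec ystar = δ • ystar := by
      rw [hystar]
      refine borderD_eigen_elim A a t0 1 δ w ?_ ?_
      · rw [ht0]; ring
      · rw [hwA, one_smul]
    have hg_eig : ∀ i : Fin m, (borderD A a t0).mulVec (g i) = δ • (g i) := by
      intro i
      rw [hgapp i]
      refine borderD_eigen_elim A a t0 0 δ _ ?_ ?_
      · rw [hhard _ (hgker i)]; ring
      · rw [hgker i, zero_smul, zero_add]
    refine ⟨m + 1, Fin.cons ystar g, ?_, ?_, 0, ?_, ?_⟩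
    · -- linear independence
      rw [linearIndependent_fin_cons]
      constructor
      · have h1 : LinearIndependent ℝ (fun i => K.subtype (B i)) :=
          B.linearIndependent.map' K.subtype (Submodule.ker_subtype K)
        exact h1.map' j (LinearMap.ker_eq_bot.mpr hjinj)
      · intro hmem
        have hle : Submodule.span ℝ (Set.range g) ≤
            LinearMap.ker (LinearMap.proj (R := ℝ) (φ := fun _ : Unit ⊕ Fin n => ℝ)
              (Sum.inl ())) := by
          rw [Submodule.span_le]
          rintro z ⟨i, rfl⟩
          rw [SetLike.mem_coe, LinearMap.mem_ker]
          have : g i (Sum.inl ()) = 0 := by rw [hgapp i]; rfl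
          exact this
        have h2 := hle hmem
        rw [LinearMap.mem_ker] at h2
        have h3 : ystar (Sum.inl ()) = 1 := rfl
        have h4 : (LinearMap.proj (R := ℝ) (φ := fun _ : Unit ⊕ Fin n => ℝ)
            (Sum.inl ())) ystar = ystar (Sum.inl ()) := rfl
        rw [h4, h3] at h2
        exact one_ne_zero h2
    · -- span = kernel
      apply le_antisymm
      · rw [Submodule.span_le]
        rintro z ⟨i, rfl⟩
        rw [SetLike.mem_coe, mem_ker_iff]
        refine Fin.cases ?_ ?_ i
        · rw [Fin.cons_zero]; exact hystar_eig
        · intro i'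
          rw [Fin.cons_succ]; exact hg_eig i'
      · intro y hy
        rw [mem_ker_iff] at hy
        set y0 : ℝ := y (Sum.inl ()) with hy0
        set v : Fin n → ℝ := (y ∘ Sum.inr) - y0 • w with hv
        have hvr : A.mulVec (y ∘ Sum.inr) = y0 • a + δ • (y ∘ Sum.inr) := by
          funext i
          have h2 := congrFun hy (Sum.inr i)
          rw [borderD_mulVec_inr] at h2
          have e1 : y0 = y (Sum.inl ()) := rfl
          simp only [Pi.add_apply, Pi.smul_apply, smul_eq_mul, Function.comp_apply] at h2 ⊢
          rw [e1]
          linarith [h2]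
        have hvmem : v ∈ K := by
          rw [hK, mem_ker_iff, hv, Matrix.mulVec_sub, Matrix.mulVec_smul, hvr, hwA]
          funext i
          simp only [Pi.sub_apply, Pi.add_apply, Pi.smul_apply, smul_eq_mul]
          ring
        have hdecomp : y = y0 • ystar + j v := by
          funext u
          cases u with
          | inl u =>
            cases u
            have e1 : ystar (Sum.inl ()) = 1 := rfl
            have e2 : (j v) (Sum.inl ()) = 0 := rfl
            simp only [Pi.add_apply, Pi.smul_apply, smul_eq_mul, e1, e2]
            exact (by ring : y (Sum.inl ()) = y0 * 1 + 0)
          | inr i =>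
            have e1 : ystar (Sum.inr i) = w i := rfl
            have e2 : (j v) (Sum.inr i) = y (Sum.inr i) - y0 * w i := rfl
            simp only [Pi.add_apply, Pi.smul_apply, smul_eq_mul, e1, e2]
            ring
        rw [hdecomp]
        apply Submodule.add_mem
        · refine Submodule.smul_mem _ _ (Submodule.subset_span ⟨0, ?_⟩)
          rw [Fin.cons_zero]
        · have hvspan : v ∈ Submodule.span ℝ (Set.range (K.subtype ∘ B)) := by
            rw [Set.range_comp, ← Submodule.map_span, B.span_eq, Submodule.map_top,
              Submodule.range_subtype]
            exact hvmem
          have h5 : j v ∈ Submodule.map j (Submodule.span ℝ (Set.range (K.subtype ∘ B))) :=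
            Submodule.mem_map_of_mem hvspan
          rw [Submodule.map_span, ← Set.range_comp] at h5
          refine Submodule.span_mono ?_ h5
          rintro z ⟨i, rfl⟩
          exact ⟨i.succ, Fin.cons_succ _ _ _⟩
    · rw [Fin.cons_zero]
      rw [show ystar (Sum.inl ()) = 1 from rfl]
      exact one_ne_zero
    · intro i hi
      obtain ⟨i', rfl⟩ := Fin.eq_succ_of_ne_zero hi
      rw [Fin.cons_succ, hgapp i']
      rfl
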